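/- The map ξ₀ : Q_Q(ℝⁿ) → ℝ^{nQ}, given by concatenating for each coordinate α ∈ {1,...,n} the sorted vector of α-th coordinates of the tuple, satisfies |ξ₀(p) − ξ₀(q)|² = ∑_{α=1}^n G((Π_α)_#(p), (Π_α)_#(q))² ≤ G(p,q)² for all p, q ∈ Q_Q(ℝⁿ); in particular ξ₀ is 1-Lipschitz. -/

import Mathlib

open Finset

/-- The Almgren metric on unordered `Q`-tuples in `ℝⁿ`. -/
noncomputable def Gdist {n Q : ℕ} (p q : Fin Q → EuclideanSpace ℝ (Fin n)) : ℝ :=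
  Finset.univ.inf' Finset.univ_nonempty
    (fun σ : Equiv.Perm (Fin Q) => Real.sqrt (∑ i, ‖p i - q (σ i)‖ ^ 2))

/-- The metric on unordered `Q`-tuples of reals. -/
noncomputable def G1 {Q : ℕ} (p q : Fin Q → ℝ) : ℝ :=
  Finset.univ.inf' Finset.univ_nonempty
    (fun σ : Equiv.Perm (Fin Q) => Real.sqrt (∑ i, (p i - q (σ i)) ^ 2))

/-- The sorting map. -/
noncomputable def ξsort {Q : ℕ} (p : Fin Q → ℝ) : Fin Q → ℝ := p ∘ Tuple.sort p

private lemma expand_sum {Q : ℕ} (a c : Fin Q → ℝ) :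
    ∑ i, (a i - c i) ^ 2
      = (∑ i, (a i) ^ 2) + (∑ i, (c i) ^ 2) - 2 * ∑ i, a i * c i := by
  rw [Finset.mul_sum, ← Finset.sum_add_distrib, ← Finset.sum_sub_distrib]
  exact Finset.sum_congr rfl fun i _ => by ring

private lemma sorted_min {Q : ℕ} {a b : Fin Q → ℝ} (ha : Monotone a) (hb : Monotone b)
    (σ : Equiv.Perm (Fin Q)) :
    ∑ i, (a i - b i) ^ 2 ≤ ∑ i, (a i - b (σ i)) ^ 2 := by
  have h1 : ∑ i, (b (σ i)) ^ 2 = ∑ i, (b i) ^ 2 :=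
    Equiv.sum_comp σ (fun i => (b i) ^ 2)
  have h2 : ∑ i, a i * b (σ i) ≤ ∑ i, a i * b i :=
    (ha.monovary hb).sum_mul_comp_perm_le_sum_mul
  rw [expand_sum a b, expand_sum a (fun i => b (σ i)), h1]
  linarith

private lemma G1_sq {Q : ℕ} (p q : Fin Q → ℝ) :
    (G1 p q) ^ 2 = ∑ i, (ξsort p i - ξsort q i) ^ 2 := by
  set τp := Tuple.sort p with hτp
  set τq := Tuple.sort q with hτq
  have ha : Monotone (ξsort p) := Tuple.monotone_sort p
  have hb : Monotone (ξsort q) := Tuple.monotone_sort q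
  set σ₀ : Equiv.Perm (Fin Q) := τq * τp⁻¹ with hσ₀
  have hS0 : ∑ i, (p i - q (σ₀ i)) ^ 2 = ∑ i, (ξsort p i - ξsort q i) ^ 2 := by
    rw [← Equiv.sum_comp τp (fun i => (p i - q (σ₀ i)) ^ 2)]
    refine Finset.sum_congr rfl fun i _ => ?_
    simp [ξsort, σ₀, τp, τq, Equiv.Perm.mul_apply]
  have hmin : ∀ σ : Equiv.Perm (Fin Q),
      ∑ i, (p i - q (σ₀ i)) ^ 2 ≤ ∑ i, (p i - q (σ i)) ^ 2 := by
    intro σ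
    rw [hS0, ← Equiv.sum_comp τp (fun i => (p i - q (σ i)) ^ 2)]
    have := sorted_min ha hb (τq⁻¹ * σ * τp)
    have heq : ∀ i, ξsort q ((τq⁻¹ * σ * τp) i) = q (σ (τp i)) := by
      intro i
      simp [ξsort, τp, τq, Equiv.Perm.mul_apply]
    calc ∑ i, (ξsort p i - ξsort q i) ^ 2
        ≤ ∑ i, (ξsort p i - ξsort q ((τq⁻¹ * σ * τp) i)) ^ 2 := this
      _ = ∑ i, (p (τp i) - q (σ (τp i))) ^ 2 := by
          refine Finset.sum_congr rfl fun i _ => ?_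
          rw [heq i]; rfl
  have hnonneg : (0:ℝ) ≤ ∑ i, (p i - q (σ₀ i)) ^ 2 :=
    Finset.sum_nonneg fun i _ => sq_nonneg _
  have hG : G1 p q = Real.sqrt (∑ i, (p i - q (σ₀ i)) ^ 2) := by
    refine le_antisymm (Finset.inf'_le _ (Finset.mem_univ σ₀)) ?_
    exact Finset.le_inf' _ _ fun σ _ => Real.sqrt_le_sqrt (hmin σ)
  rw [hG, Real.sq_sqrt hnonneg, hS0]

/-- The map `ξ₀ : Q_Q(ℝⁿ) → ℝ^{nQ}`, concatenating the sorted vectors of `α`-th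
coordinates, satisfies `|ξ₀(p) − ξ₀(q)|² = ∑_α G((Π_α)_# p, (Π_α)_# q)² ≤ G(p,q)²`;
in particular `ξ₀` is `1`-Lipschitz. -/
theorem stmt_3 (n Q : ℕ) (p q : Fin Q → EuclideanSpace ℝ (Fin n)) :
    (∑ α : Fin n, ∑ i : Fin Q,
        (ξsort (fun j => p j α) i - ξsort (fun j => q j α) i) ^ 2
      = ∑ α : Fin n, (G1 (fun j => p j α) (fun j => q j α)) ^ 2) ∧
    ∑ α : Fin n, (G1 (fun j => p j α) (fun j => q j α)) ^ 2 ≤ (Gdist p q) ^ 2 := by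
  constructor
  · exact Finset.sum_congr rfl fun α _ => (G1_sq _ _).symm
  · obtain ⟨σ₀, -, hσ₀⟩ := Finset.exists_mem_eq_inf' (Finset.univ_nonempty)
      (fun σ : Equiv.Perm (Fin Q) => Real.sqrt (∑ i, ‖p i - q (σ i)‖ ^ 2))
    have hnn : (0:ℝ) ≤ ∑ i, ‖p i - q (σ₀ i)‖ ^ 2 :=
      Finset.sum_nonneg fun i _ => sq_nonneg _
    have hGd : (Gdist p q) ^ 2 = ∑ i, ‖p i - q (σ₀ i)‖ ^ 2 := by
      rw [Gdist, hσ₀, Real.sq_sqrt hnn]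
    have hnorm : ∀ i, ‖p i - q (σ₀ i)‖ ^ 2 = ∑ α, (p i α - q (σ₀ i) α) ^ 2 := by
      intro i
      rw [EuclideanSpace.norm_eq, Real.sq_sqrt (Finset.sum_nonneg fun α _ => sq_nonneg _)]
      refine Finset.sum_congr rfl fun α _ => ?_
      rw [Real.norm_eq_abs, sq_abs]
      rfl
    rw [hGd]
    calc ∑ α : Fin n, (G1 (fun j => p j α) (fun j => q j α)) ^ 2
        ≤ ∑ α : Fin n, ∑ i, (p i α - q (σ₀ i) α) ^ 2 := by
          refine Finset.sum_le_sum fun α _ => ?_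
          have h0 : (0:ℝ) ≤ G1 (fun j => p j α) (fun j => q j α) :=
            Finset.le_inf' _ _ fun σ _ => Real.sqrt_nonneg _
          have hle : G1 (fun j => p j α) (fun j => q j α)
              ≤ Real.sqrt (∑ i, (p i α - q (σ₀ i) α) ^ 2) :=
            Finset.inf'_le _ (Finset.mem_univ σ₀)
          calc (G1 (fun j => p j α) (fun j => q j α)) ^ 2
              ≤ (Real.sqrt (∑ i, (p i α - q (σ₀ i) α) ^ 2)) ^ 2 := by
                exact pow_le_pow_left₀ h0 hle 2
            _ = ∑ i, (p i α - q (σ₀ i) α) ^ 2 :=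
                Real.sq_sqrt (Finset.sum_nonneg fun i _ => sq_nonneg _)
      _ = ∑ i, ∑ α, (p i α - q (σ₀ i) α) ^ 2 := Finset.sum_comm
      _ = ∑ i, ‖p i - q (σ₀ i)‖ ^ 2 := by
          exact Finset.sum_congr rfl fun i _ => (hnorm i).symm
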